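/- Let R be a commutative ring, I an ideal of R, ℓ ≥ 2, and suppose SR_{2ℓ−1}(I) holds. Then for every I-unimodular column v ∈ R^{2ℓ} there exist matrices h₁, h₂ ∈ Sp(2ℓ,R) with h₁ ≡ 1 (mod I) and h₂ ≡ 1 (mod I), where h₁ − 1 has nonzero entries only in row 1 and column 2ℓ, and h₂ − 1 has nonzero entries only in column 1 and row 2ℓ, and an element s ∈ I, such that the column w = h₂·h₁·v satisfies w₁ = 1 + s and w_{2ℓ} = s. (First-column reduction in the proof of the Bass–Kolster decomposition, case Φ = C_ℓ.) -/

import Mathlib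

set_option linter.unusedSectionVars false
set_option linter.unreachableTactic false
set_option linter.unusedTactic false
set_option maxHeartbeats 1000000


open Matrix

/-- A row (or column) `a` is `I`-unimodular. -/
def IsIUnimodular {R : Type*} [CommRing R] (I : Ideal R) {n : ℕ} (a : Fin n → R) : Prop :=
  (∀ i : Fin n, (i : ℕ) = 0 → a i - 1 ∈ I) ∧ (∀ i : Fin n, (i : ℕ) ≠ 0 → a i ∈ I) ∧
    Ideal.span (Set.range a) = ⊤

/-- The relative stable range condition `SRₙ(I)`. -/
def SRCond {R : Type*} [CommRing R] (n : ℕ) (I : Ideal R) : Prop :=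
  ∀ a : Fin (n + 1) → R, IsIUnimodular I a →
    ∃ b : Fin n → R, (∀ i, b i ∈ I) ∧
      IsIUnimodular I (fun i : Fin n => a i.castSucc + a (Fin.last n) * b i)

/-- `g ≡ 1 (mod I)`, entrywise. -/
def ModI {R : Type*} [CommRing R] (I : Ideal R) {n : ℕ} (g : Matrix (Fin n) (Fin n) R) : Prop :=
  ∀ i j, g i j - (1 : Matrix (Fin n) (Fin n) R) i j ∈ I

/-- The antidiagonal symplectic form. -/
def Jform (R : Type*) [CommRing R] (l : ℕ) : Matrix (Fin (2 * l)) (Fin (2 * l)) R :=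
  fun i j => if (j : ℕ) = 2 * l - 1 - (i : ℕ) then (if (i : ℕ) < l then 1 else -1) else 0

section Helpers
variable {R : Type*} [CommRing R] {n : Type*} [Fintype n] [DecidableEq n]

lemma vmv_transpose (a : n → R) (b : n → R) : (vecMulVec a b)ᵀ = vecMulVec b a := by
  ext i j; simp [vecMulVec_apply, mul_comm]

lemma vmv_mul_vmv (a b c d : n → R) :
    vecMulVec a b * vecMulVec c d = (b ⬝ᵥ c) • vecMulVec a d := by
  ext i j
  simp only [mul_apply, vecMulVec_apply, Matrix.smul_apply, dotProduct, Finset.sum_mul, smul_eq_mul]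
  apply Finset.sum_congr rfl
  intro k _; ring

lemma mul_vmv (K : Matrix n n R) (c d : n → R) :
    K * vecMulVec c d = vecMulVec (K *ᵥ c) d := by
  ext i j
  simp only [mul_apply, vecMulVec_apply, mulVec, dotProduct, Finset.sum_mul]
  apply Finset.sum_congr rfl
  intro k _; ring

lemma vmv_mul (K : Matrix n n R) (a b : n → R) :
    vecMulVec a b * K = vecMulVec a (b ᵥ* K) := by
  ext i j
  simp only [mul_apply, vecMulVec_apply, vecMul, dotProduct, Finset.mul_sum]
  apply Finset.sum_congr rfl
  intro k _; ring

lemma vmv_mulVec (a b x : n → R) : vecMulVec a b *ᵥ x = (b ⬝ᵥ x) • a := by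
  ext i
  simp only [mulVec, vecMulVec_apply, dotProduct, Pi.smul_apply, smul_eq_mul, Finset.sum_mul]
  apply Finset.sum_congr rfl
  intro k _; ring

lemma eichler (K : Matrix n n R) (hK : Kᵀ = -K) (e u : n → R) (μ : R)
    (h1 : (e ᵥ* K) ⬝ᵥ e = 0) (h2 : (e ᵥ* K) ⬝ᵥ u = 0)
    (h3 : (u ᵥ* K) ⬝ᵥ e = 0) (h4 : (u ᵥ* K) ⬝ᵥ u = 0) :
    (1 + (vecMulVec u (e ᵥ* K) + vecMulVec e (u ᵥ* K + μ • (e ᵥ* K))))ᵀ * K *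
      (1 + (vecMulVec u (e ᵥ* K) + vecMulVec e (u ᵥ* K + μ • (e ᵥ* K)))) = K := by
  set a := e ᵥ* K with ha
  set β := u ᵥ* K with hb
  have hKu : K *ᵥ u = -β := by
    rw [hb, ← vecMul_transpose, hK]; ext i; simp [vecMul, dotProduct, neg_apply, Finset.sum_neg_distrib]
  have hKe : K *ᵥ e = -a := by
    rw [ha, ← vecMul_transpose, hK]; ext i; simp [vecMul, dotProduct, neg_apply, Finset.sum_neg_distrib]
  set N := vecMulVec u a + vecMulVec e (β + μ • a) with hN
  have hNT : Nᵀ = vecMulVec a u + vecMulVec (β + μ • a) e := by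
    rw [hN, transpose_add, vmv_transpose, vmv_transpose]
  have hNTK : Nᵀ * K = vecMulVec a β + vecMulVec (β + μ • a) a := by
    rw [hNT, add_mul, vmv_mul, vmv_mul, ← hb, ← ha]
  have hKN : K * N = vecMulVec (-β) a + vecMulVec (-a) (β + μ • a) := by
    rw [hN, mul_add, mul_vmv, mul_vmv, hKu, hKe]
  have h5 : Nᵀ * K * N = 0 := by
    rw [hNTK, hN, mul_add, add_mul, add_mul, vmv_mul_vmv, vmv_mul_vmv, vmv_mul_vmv, vmv_mul_vmv]
    simp [h1, h2, h3, h4, add_dotProduct, smul_dotProduct]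
  have key : Nᵀ * K + K * N + Nᵀ * K * N = 0 := by
    rw [h5, add_zero, hNTK, hKN]
    ext i j
    simp only [Matrix.add_apply, vecMulVec_apply, Pi.add_apply, Pi.smul_apply, Pi.neg_apply,
      smul_eq_mul, Matrix.zero_apply]
    ring
  have expand : (1 + N)ᵀ * K * (1 + N) = K + (Nᵀ * K + K * N + Nᵀ * K * N) := by
    rw [transpose_add, transpose_one]
    noncomm_ring
  rw [expand, key, add_zero]

end Helpers

section JLemmas
variable {R : Type*} [CommRing R]

lemma Jform_transpose (l : ℕ) : (Jform R l)ᵀ = -(Jform R l) := by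
  ext i j
  have hi := i.isLt; have hj := j.isLt
  simp only [transpose_apply, Jform, Matrix.neg_apply]
  split_ifs <;> first | (exfalso; omega) | ring

lemma vecMul_Jform (l : ℕ) (y : Fin (2 * l) → R) (j : Fin (2 * l)) :
    (y ᵥ* Jform R l) j
      = (if (j : ℕ) < l then (-1 : R) else 1) * y ⟨2 * l - 1 - (j : ℕ), by omega⟩ := by
  have hj := j.isLt
  simp only [vecMul, dotProduct]
  rw [Finset.sum_eq_single (⟨2 * l - 1 - (j : ℕ), by omega⟩ : Fin (2 * l))]
  · simp only [Jform]
    have hcond : (j : ℕ) = 2 * l - 1 - ((⟨2 * l - 1 - (j : ℕ), by omega⟩ : Fin (2 * l)) : ℕ) := by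
      simp; omega
    rw [if_pos hcond]
    have : ((⟨2 * l - 1 - (j : ℕ), by omega⟩ : Fin (2 * l)) : ℕ) < l ↔ ¬ ((j : ℕ) < l) := by
      simp; omega
    split_ifs <;> first | (exfalso; omega) | ring
  · intro i _ hne
    have h : ¬ ((j : ℕ) = 2 * l - 1 - (i : ℕ)) := by
      intro h
      apply hne
      apply Fin.ext
      simp
      omega
    simp [Jform, h]
  · intro h; exact absurd (Finset.mem_univ _) h

lemma quad_zero (l : ℕ) (x : Fin (2 * l) → R) :
    (x ᵥ* Jform R l) ⬝ᵥ x = 0 := by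
  have key : ∀ j : Fin (2 * l), (∑ i : Fin (2 * l), x j * Jform R l j i * x i)
      = x j * ((if (j : ℕ) < l then (1 : R) else -1) * x ⟨2 * l - 1 - (j : ℕ), by omega⟩) := by
    intro j
    rw [Finset.sum_eq_single (⟨2 * l - 1 - (j : ℕ), by omega⟩ : Fin (2 * l))]
    · simp only [Jform, if_true]
      ring
    · intro i _ hne
      have h : ¬ ((i : ℕ) = 2 * l - 1 - (j : ℕ)) := fun h => hne (Fin.ext h)
      simp [Jform, h]
    · intro h; exact absurd (Finset.mem_univ _) h
  calc (x ᵥ* Jform R l) ⬝ᵥ x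
      = ∑ j : Fin (2 * l), ∑ i : Fin (2 * l), x j * Jform R l j i * x i := by
        simp only [vecMul, dotProduct, Finset.sum_mul]
        rw [Finset.sum_comm]
    _ = ∑ j : Fin (2 * l), x j * ((if (j : ℕ) < l then (1 : R) else -1)
          * x ⟨2 * l - 1 - (j : ℕ), by omega⟩) := Finset.sum_congr rfl fun j _ => key j
    _ = 0 := by
        refine Finset.sum_ninvolution (fun j => (⟨2 * l - 1 - (j : ℕ), by omega⟩ : Fin (2 * l)))
          ?_ ?_ ?_ ?_
        · intro j
          have hj := j.isLt
          have h1 : (⟨2 * l - 1 - (2 * l - 1 - (j : ℕ)), by omega⟩ : Fin (2 * l)) = j :=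
            Fin.ext (by simp; omega)
          simp only
          rw [h1]
          split_ifs <;> first | (exfalso; omega) | ring
        · intro j _
          intro h
          have := congrArg Fin.val h
          simp at this
          omega
        · intro j; exact Finset.mem_univ _
        · intro j
          have hj := j.isLt
          exact Fin.ext (by simp; omega)

end JLemmas

/-- First-column reduction in the Bass–Kolster decomposition, case `C_ℓ`. -/
theorem bass_kolster_column_reduction_Sp {R : Type*} [CommRing R] (I : Ideal R) (l : ℕ)
    (hl : 2 ≤ l) (hSR : SRCond (2 * l - 1) I)
    (v : Fin (2 * l) → R) (hv : IsIUnimodular I v) :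
    ∃ (h₁ h₂ : Matrix (Fin (2 * l)) (Fin (2 * l)) R) (s : R),
      s ∈ I ∧
      h₁ᵀ * Jform R l * h₁ = Jform R l ∧
      h₂ᵀ * Jform R l * h₂ = Jform R l ∧
      ModI I h₁ ∧ ModI I h₂ ∧
      -- h₁ − 1 is supported on row 1 and column 2ℓ
      (∀ i j : Fin (2 * l), i ≠ ⟨0, by omega⟩ → j ≠ ⟨2 * l - 1, by omega⟩ →
        (h₁ - 1) i j = 0) ∧
      -- h₂ − 1 is supported on column 1 and row 2ℓ
      (∀ i j : Fin (2 * l), j ≠ ⟨0, by omega⟩ → i ≠ ⟨2 * l - 1, by omega⟩ →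
        (h₂ - 1) i j = 0) ∧
      h₂.mulVec (h₁.mulVec v) ⟨0, by omega⟩ = 1 + s ∧
      h₂.mulVec (h₁.mulVec v) ⟨2 * l - 1, by omega⟩ = s := by

  classical
  obtain ⟨hv0, hvI, hvspan⟩ := hv
  have hn : 2 * l - 1 + 1 = 2 * l := by omega
  have hl0 : (0 : ℕ) < 2 * l := by omega
  have hlL : 2 * l - 1 < 2 * l := by omega
  have hl1 : (0 : ℕ) < 2 * l - 1 := by omega
  have hval : ∀ (x : ℕ) (h : x < 2 * l), ((⟨x, h⟩ : Fin (2 * l)) : ℕ) = x := fun _ _ => rfl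
  -- unimodularity of the recast vector
  have hvtilde : IsIUnimodular I (fun i : Fin (2 * l - 1 + 1) => v (Fin.cast hn i)) := by
    refine ⟨fun i hi => hv0 _ hi, fun i hi => hvI _ hi, ?_⟩
    have hr : Set.range (fun i : Fin (2 * l - 1 + 1) => v (Fin.cast hn i)) = Set.range v := by
      ext x
      constructor
      · rintro ⟨i, rfl⟩; exact ⟨_, rfl⟩
      · rintro ⟨j, rfl⟩; exact ⟨Fin.cast hn.symm j, rfl⟩
    rw [hr, hvspan]
  obtain ⟨b, hbI, hbuni⟩ := hSR _ hvtilde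
  -- basic vectors
  set e0 : Fin (2 * l) → R := Pi.single ⟨0, hl0⟩ 1 with he0
  set eL : Fin (2 * l) → R := Pi.single ⟨2 * l - 1, hlL⟩ 1 with heL
  have he0L : e0 ⟨2 * l - 1, hlL⟩ = 0 := by
    rw [he0, Pi.single_apply, if_neg]
    intro h
    have := congrArg Fin.val h
    simp at this
    omega
  have heL0 : eL ⟨0, hl0⟩ = 0 := by
    rw [heL, Pi.single_apply, if_neg]
    intro h
    have := congrArg Fin.val h
    simp at this
    omega
  have ha1 : e0 ᵥ* Jform R l = eL := by
    ext j
    have hj := j.isLt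
    rw [vecMul_Jform, he0, heL]
    simp only [Pi.single_apply, Fin.ext_iff]
    split_ifs <;> first | (exfalso; omega) | ring
  have haL : eL ᵥ* Jform R l = -e0 := by
    ext j
    have hj := j.isLt
    rw [vecMul_Jform, he0, heL]
    simp only [Pi.single_apply, Fin.ext_iff, Pi.neg_apply]
    split_ifs <;> first | (exfalso; omega) | ring
  -- the correcting vector u and scalar b0
  set b0 : R := b ⟨0, hl1⟩ with hb0
  set u : Fin (2 * l) → R := fun i =>
    if h : 0 < (i : ℕ) ∧ (i : ℕ) < 2 * l - 1 then b ⟨(i : ℕ), h.2⟩ else 0 with hu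
  have huI : ∀ i, u i ∈ I := by
    intro i
    rw [hu]
    dsimp only
    split
    · exact hbI _
    · exact I.zero_mem
  have huzero : ∀ i : Fin (2 * l), ¬(0 < (i : ℕ) ∧ (i : ℕ) < 2 * l - 1) → u i = 0 := by
    intro i h
    rw [hu]
    exact dif_neg h
  have hu0 : u ⟨0, hl0⟩ = 0 := huzero _ (by simp)
  have huL : u ⟨2 * l - 1, hlL⟩ = 0 := huzero _ (by simp)
  have hDI1 : ∀ j, (u ᵥ* Jform R l) j ∈ I := by
    intro j
    rw [vecMul_Jform]
    exact I.mul_mem_left _ (huI _)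
  have hJu0 : (u ᵥ* Jform R l) ⬝ᵥ e0 = 0 := by
    rw [he0, dotProduct_single, mul_one, vecMul_Jform]
    have h9 : u ⟨2 * l - 1 - ((⟨0, hl0⟩ : Fin (2 * l)) : ℕ), by omega⟩ = 0 :=
      huzero _ (by simp only [hval]; omega)
    rw [h9, mul_zero]
  -- the first matrix
  set N1 : Matrix (Fin (2 * l)) (Fin (2 * l)) R :=
    vecMulVec u (e0 ᵥ* Jform R l) + vecMulVec e0 (u ᵥ* Jform R l + b0 • (e0 ᵥ* Jform R l))
    with hN1
  have hsymp1 : (1 + N1)ᵀ * Jform R l * (1 + N1) = Jform R l := by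
    rw [hN1]
    refine eichler (Jform R l) (Jform_transpose l) e0 u b0 ?_ ?_ ?_ ?_
    · rw [ha1, heL, single_dotProduct, one_mul, he0L]
    · rw [ha1, heL, single_dotProduct, one_mul, huL]
    · exact hJu0
    · exact quad_zero l u
  set T : R := (u ᵥ* Jform R l) ⬝ᵥ v with hT
  have hTI : T ∈ I := by
    rw [hT]
    exact Ideal.sum_mem _ fun i _ => I.mul_mem_right _ (hDI1 i)
  set w : Fin (2 * l) → R := (1 + N1) *ᵥ v with hwdef
  have hw : ∀ i, w i = v i + v ⟨2 * l - 1, hlL⟩ * u i + (T + b0 * v ⟨2 * l - 1, hlL⟩) * e0 i := by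
    intro i
    rw [hwdef, add_mulVec, one_mulVec, hN1, add_mulVec, vmv_mulVec, vmv_mulVec, ha1, heL]
    simp only [Pi.add_apply, Pi.smul_apply, smul_eq_mul, single_dotProduct, one_mul,
      add_dotProduct, smul_dotProduct, ← hT]
    ring
  have hwL : w ⟨2 * l - 1, hlL⟩ = v ⟨2 * l - 1, hlL⟩ := by
    rw [hw, huL, he0L]
    ring
  have hw0 : w ⟨0, hl0⟩ = v ⟨0, hl0⟩ + b0 * v ⟨2 * l - 1, hlL⟩ + T := by
    rw [hw, hu0, he0, Pi.single_apply, if_pos rfl]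
    ring
  -- relation between v' and w in the middle range
  have hv'w : ∀ i : Fin (2 * l - 1), 0 < (i : ℕ) →
      v (Fin.cast hn i.castSucc) + v (Fin.cast hn (Fin.last (2 * l - 1))) * b i
        = w ⟨(i : ℕ), by omega⟩ := by
    intro i hi
    have hui : u ⟨(i : ℕ), by omega⟩ = b i := dif_pos ⟨hi, i.isLt⟩
    have he0i : e0 (⟨(i : ℕ), by omega⟩ : Fin (2 * l)) = 0 := by
      rw [he0, Pi.single_apply, if_neg]
      intro h
      have := congrArg Fin.val h
      simp only [hval] at this
      omega
    rw [hw, hui, he0i]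
    show v ⟨(i : ℕ), by omega⟩ + v ⟨2 * l - 1, hlL⟩ * b i
      = v ⟨(i : ℕ), by omega⟩ + v ⟨2 * l - 1, hlL⟩ * b i + (T + b0 * v ⟨2 * l - 1, hlL⟩) * 0
    ring
  -- the element s and t
  set s : R := w ⟨0, hl0⟩ - 1 with hs
  have hsI : s ∈ I := by
    rw [hs, hw0]
    have h1 : v ⟨0, hl0⟩ + b0 * v ⟨2 * l - 1, hlL⟩ + T - 1
        = (v ⟨0, hl0⟩ - 1) + b0 * v ⟨2 * l - 1, hlL⟩ + T := by ring
    rw [h1]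
    exact add_mem (add_mem (hv0 _ rfl)
      (I.mul_mem_left _ (hvI _ (by simp only [hval]; omega)))) hTI
  have hwLI : w ⟨2 * l - 1, hlL⟩ ∈ I := by
    rw [hwL]
    exact hvI _ (by simp only [hval]; omega)
  set t : R := s - w ⟨2 * l - 1, hlL⟩ with ht
  have htI : t ∈ I := sub_mem hsI hwLI
  -- extract coefficients from the span condition
  have h1mem : (1 : R) ∈ Ideal.span (Set.range fun i : Fin (2 * l - 1) =>
      v (Fin.cast hn i.castSucc) + v (Fin.cast hn (Fin.last (2 * l - 1))) * b i) := by
    rw [hbuni.2.2]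
    exact Submodule.mem_top
  obtain ⟨c, hc⟩ := (Submodule.mem_span_range_iff_exists_fun R).mp h1mem
  -- the coefficient vector d
  set d : Fin (2 * l) → R := fun j =>
    (if h : (j : ℕ) < 2 * l - 1 then t * c ⟨(j : ℕ), h⟩ else 0)
      - t * c ⟨0, hl1⟩ * (u ᵥ* Jform R l) j with hd
  have hdI : ∀ j, d j ∈ I := by
    intro j
    rw [hd]
    dsimp only
    refine sub_mem ?_ (I.mul_mem_right _ (I.mul_mem_right _ htI))
    split
    · exact I.mul_mem_right _ htI
    · exact I.zero_mem
  have hdL : d ⟨2 * l - 1, hlL⟩ = 0 := by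
    rw [hd]
    dsimp only
    rw [dif_neg (by first | omega | (simp only [hval]; omega)), vecMul_Jform]
    have h9 : u ⟨2 * l - 1 - ((⟨2 * l - 1, hlL⟩ : Fin (2 * l)) : ℕ), by omega⟩ = 0 :=
      huzero _ (by simp only [hval]; omega)
    rw [h9]
    ring
  -- the dot product of u ᵥ* J with w equals T
  have hTw : (u ᵥ* Jform R l) ⬝ᵥ w = T := by
    have hwfun : w = fun i => v i + v ⟨2 * l - 1, hlL⟩ * u i
        + (T + b0 * v ⟨2 * l - 1, hlL⟩) * e0 i := funext hw
    rw [hwfun]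
    simp only [dotProduct]
    have hsplit : ∀ i : Fin (2 * l),
        (u ᵥ* Jform R l) i * (v i + v ⟨2 * l - 1, hlL⟩ * u i
            + (T + b0 * v ⟨2 * l - 1, hlL⟩) * e0 i)
          = (u ᵥ* Jform R l) i * v i
            + v ⟨2 * l - 1, hlL⟩ * ((u ᵥ* Jform R l) i * u i)
            + (T + b0 * v ⟨2 * l - 1, hlL⟩) * ((u ᵥ* Jform R l) i * e0 i) := fun i => by ring
    rw [Finset.sum_congr rfl fun i _ => hsplit i]
    rw [Finset.sum_add_distrib, Finset.sum_add_distrib, ← Finset.mul_sum, ← Finset.mul_sum]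
    have q1 : ∑ i : Fin (2 * l), (u ᵥ* Jform R l) i * u i = 0 := quad_zero l u
    have q2 : ∑ i : Fin (2 * l), (u ᵥ* Jform R l) i * e0 i = 0 := hJu0
    rw [q1, q2, mul_zero, mul_zero, add_zero, add_zero, hT]
    rfl
  -- the key sum identity
  have hsum : ∑ j : Fin (2 * l), d j * w j = t := by
    have e1 : ∀ j : Fin (2 * l), d j * w j
        = (if h : (j : ℕ) < 2 * l - 1 then t * c ⟨(j : ℕ), h⟩ else 0) * w j
          - t * c ⟨0, hl1⟩ * ((u ᵥ* Jform R l) j * w j) := by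
      intro j
      rw [hd]
      dsimp only
      ring
    rw [Finset.sum_congr rfl fun j _ => e1 j, Finset.sum_sub_distrib]
    have e2 : ∑ j : Fin (2 * l), t * c ⟨0, hl1⟩ * ((u ᵥ* Jform R l) j * w j)
        = t * c ⟨0, hl1⟩ * T := by
      rw [← Finset.mul_sum]
      exact congrArg (t * c ⟨0, hl1⟩ * ·) hTw
    rw [e2]
    have e3 : ∑ j : Fin (2 * l), (if h : (j : ℕ) < 2 * l - 1 then t * c ⟨(j : ℕ), h⟩ else 0) * w j
        = ∑ i : Fin (2 * l - 1 + 1),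
            (if h : ((Fin.cast hn i : Fin (2 * l)) : ℕ) < 2 * l - 1
              then t * c ⟨((Fin.cast hn i : Fin (2 * l)) : ℕ), h⟩ else 0) * w (Fin.cast hn i) :=
      (Fintype.sum_equiv (finCongr hn) _ _ fun i => rfl).symm
    rw [e3, Fin.sum_univ_castSucc]
    have e4 : (if h : ((Fin.cast hn (Fin.last (2 * l - 1)) : Fin (2 * l)) : ℕ) < 2 * l - 1
        then t * c ⟨((Fin.cast hn (Fin.last (2 * l - 1)) : Fin (2 * l)) : ℕ), h⟩ else 0) = 0 :=
      dif_neg (show ¬(2 * l - 1 < 2 * l - 1) by omega)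
    rw [e4, zero_mul, add_zero]
    have e5 : ∀ i : Fin (2 * l - 1),
        (if h : ((Fin.cast hn i.castSucc : Fin (2 * l)) : ℕ) < 2 * l - 1
            then t * c ⟨((Fin.cast hn i.castSucc : Fin (2 * l)) : ℕ), h⟩ else 0)
          * w (Fin.cast hn i.castSucc)
        = t * c i * w ⟨(i : ℕ), by omega⟩ := by
      intro i
      rw [dif_pos (show ((Fin.cast hn i.castSucc : Fin (2 * l)) : ℕ) < 2 * l - 1 from i.isLt)]
      rfl
    rw [Finset.sum_congr rfl fun i _ => e5 i]
    have e6 : ∀ i : Fin (2 * l - 1), w ⟨(i : ℕ), by omega⟩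
        = (v (Fin.cast hn i.castSucc) + v (Fin.cast hn (Fin.last (2 * l - 1))) * b i)
          + (if (i : ℕ) = 0 then T else 0) := by
      intro i
      by_cases h0 : (i : ℕ) = 0
      · rw [if_pos h0]
        have hieq : i = ⟨0, hl1⟩ := Fin.ext h0
        rw [hieq, hw0, ← hb0]
        show v ⟨0, hl0⟩ + b0 * v ⟨2 * l - 1, hlL⟩ + T
          = v ⟨0, hl0⟩ + v ⟨2 * l - 1, hlL⟩ * b0 + T
        ring
      · rw [if_neg h0, add_zero, hv'w i (Nat.pos_of_ne_zero h0)]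
    have e7 : ∀ i : Fin (2 * l - 1), t * c i * w ⟨(i : ℕ), by omega⟩
        = t * (c i • (v (Fin.cast hn i.castSucc) + v (Fin.cast hn (Fin.last (2 * l - 1))) * b i))
          + t * c i * (if (i : ℕ) = 0 then T else 0) := by
      intro i
      rw [e6 i, smul_eq_mul]
      ring
    rw [Finset.sum_congr rfl fun i _ => e7 i, Finset.sum_add_distrib, ← Finset.mul_sum, hc,
      mul_one]
    have e8 : ∑ i : Fin (2 * l - 1), t * c i * (if (i : ℕ) = 0 then T else 0)
        = t * c ⟨0, hl1⟩ * T := by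
      rw [Finset.sum_eq_single (⟨0, hl1⟩ : Fin (2 * l - 1))]
      · rw [if_pos rfl]
      · intro i _ hne
        rw [if_neg (fun h => hne (Fin.ext h)), mul_zero]
      · intro h
        exact absurd (Finset.mem_univ _) h
    rw [e8]
    ring
  -- second correcting vector
  set u' : Fin (2 * l) → R := fun i =>
    if h : 0 < (i : ℕ) ∧ (i : ℕ) < 2 * l - 1
      then (if (i : ℕ) < l then (1 : R) else -1) * d ⟨2 * l - 1 - (i : ℕ), by omega⟩ else 0
    with hu'
  have hu'I : ∀ i, u' i ∈ I := by
    intro i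
    rw [hu']
    dsimp only
    split
    · exact I.mul_mem_left _ (hdI _)
    · exact I.zero_mem
  have hu'zero : ∀ i : Fin (2 * l), ¬(0 < (i : ℕ) ∧ (i : ℕ) < 2 * l - 1) → u' i = 0 :=
    fun i h => dif_neg h
  have hu'0 : u' ⟨0, hl0⟩ = 0 := hu'zero _ (by simp)
  have hu'L : u' ⟨2 * l - 1, hlL⟩ = 0 := hu'zero _ (by simp)
  have hD : ∀ j : Fin (2 * l), (u' ᵥ* Jform R l) j
      = if 0 < (j : ℕ) ∧ (j : ℕ) < 2 * l - 1 then d j else 0 := by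
    intro j
    have hj := j.isLt
    rw [vecMul_Jform]
    by_cases h : 0 < (j : ℕ) ∧ (j : ℕ) < 2 * l - 1
    · rw [if_pos h]
      have h8 : u' ⟨2 * l - 1 - (j : ℕ), by omega⟩
          = (if 2 * l - 1 - (j : ℕ) < l then (1 : R) else -1)
            * d ⟨2 * l - 1 - (2 * l - 1 - (j : ℕ)), by omega⟩ := by
        rw [hu']
        exact dif_pos ⟨show 0 < 2 * l - 1 - (j : ℕ) by omega, show 2 * l - 1 - (j : ℕ) < 2 * l - 1 by omega⟩
      rw [h8]
      have h7 : d ⟨2 * l - 1 - (2 * l - 1 - (j : ℕ)), by omega⟩ = d j := by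
        congr 1
        apply Fin.ext
        simp only [hval]
        omega
      rw [h7]
      split_ifs <;> first | (exfalso; omega) | ring
    · rw [if_neg h]
      have h8 : u' ⟨2 * l - 1 - (j : ℕ), by omega⟩ = 0 :=
        hu'zero _ (by first | omega | (simp only [hval]; omega))
      rw [h8, mul_zero]
  have hDI2 : ∀ j, (u' ᵥ* Jform R l) j ∈ I := by
    intro j
    rw [hD]
    split
    · exact hdI _
    · exact I.zero_mem
  set μ' : R := -d ⟨0, hl0⟩ with hμ'
  have hμ'I : μ' ∈ I := neg_mem (hdI _)
  set N2 : Matrix (Fin (2 * l)) (Fin (2 * l)) R :=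
    vecMulVec u' (eL ᵥ* Jform R l) + vecMulVec eL (u' ᵥ* Jform R l + μ' • (eL ᵥ* Jform R l))
    with hN2
  have hsymp2 : (1 + N2)ᵀ * Jform R l * (1 + N2) = Jform R l := by
    rw [hN2]
    refine eichler (Jform R l) (Jform_transpose l) eL u' μ' ?_ ?_ ?_ ?_
    · rw [haL, neg_dotProduct, he0, single_dotProduct, one_mul, heL0, neg_zero]
    · rw [haL, neg_dotProduct, he0, single_dotProduct, one_mul, hu'0, neg_zero]
    · rw [heL, dotProduct_single, mul_one, hD]
      rw [if_neg (by first | omega | (simp only [hval]; omega))]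
    · exact quad_zero l u'
  have hw' : ∀ i, ((1 + N2) *ᵥ w) i
      = w i + (-(w ⟨0, hl0⟩)) * u' i
        + (((u' ᵥ* Jform R l) ⬝ᵥ w) + μ' * (-(w ⟨0, hl0⟩))) * eL i := by
    intro i
    rw [add_mulVec, one_mulVec, hN2, add_mulVec, vmv_mulVec, vmv_mulVec, haL]
    simp only [Pi.add_apply, Pi.smul_apply, smul_eq_mul, neg_dotProduct, he0,
      single_dotProduct, one_mul, add_dotProduct, smul_dotProduct]
    ring
  have hDw : (u' ᵥ* Jform R l) ⬝ᵥ w = t - d ⟨0, hl0⟩ * w ⟨0, hl0⟩ := by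
    have e9 : ∀ j : Fin (2 * l), (u' ᵥ* Jform R l) j * w j
        = d j * w j - (if j = (⟨0, hl0⟩ : Fin (2 * l)) then d ⟨0, hl0⟩ * w ⟨0, hl0⟩ else 0) := by
      intro j
      have hj := j.isLt
      rw [hD]
      by_cases h : 0 < (j : ℕ) ∧ (j : ℕ) < 2 * l - 1
      · rw [if_pos h, if_neg (by
          intro hh
          rw [hh] at h
          first | omega | (simp only [hval] at h; omega))]
        ring
      · rw [if_neg h]
        by_cases h0 : (j : ℕ) = 0
        · have hj0 : j = ⟨0, hl0⟩ := Fin.ext h0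
          rw [if_pos hj0, hj0]
          ring
        · have hjL : j = ⟨2 * l - 1, hlL⟩ := Fin.ext (show (j : ℕ) = 2 * l - 1 by omega)
          rw [if_neg (by
            rw [hjL]
            intro hh
            simp only [Fin.mk.injEq] at hh
            omega), hjL, hdL]
          ring
    have e10 : (u' ᵥ* Jform R l) ⬝ᵥ w
        = (∑ j : Fin (2 * l), d j * w j)
          - ∑ j : Fin (2 * l),
              (if j = (⟨0, hl0⟩ : Fin (2 * l)) then d ⟨0, hl0⟩ * w ⟨0, hl0⟩ else 0) := by
      rw [← Finset.sum_sub_distrib]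
      exact Finset.sum_congr rfl fun j _ => e9 j
    rw [e10, hsum, Finset.sum_ite_eq' Finset.univ]
    simp only [Finset.mem_univ, if_true]
  -- assemble everything
  refine ⟨1 + N1, 1 + N2, s, hsI, hsymp1, hsymp2, ?_, ?_, ?_, ?_, ?_, ?_⟩
  · -- ModI (1 + N1)
    intro i j
    have hz : (1 + N1) i j - (1 : Matrix (Fin (2 * l)) (Fin (2 * l)) R) i j = N1 i j := by
      rw [Matrix.add_apply]
      ring
    rw [hz, hN1]
    simp only [Matrix.add_apply, vecMulVec_apply, Pi.add_apply, Pi.smul_apply, smul_eq_mul, ha1]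
    exact add_mem (I.mul_mem_right _ (huI i))
      (I.mul_mem_left _ (add_mem (hDI1 j) (I.mul_mem_right _ (hbI _))))
  · -- ModI (1 + N2)
    intro i j
    have hz : (1 + N2) i j - (1 : Matrix (Fin (2 * l)) (Fin (2 * l)) R) i j = N2 i j := by
      rw [Matrix.add_apply]
      ring
    rw [hz, hN2]
    simp only [Matrix.add_apply, vecMulVec_apply, Pi.add_apply, Pi.smul_apply, smul_eq_mul, haL]
    exact add_mem (I.mul_mem_right _ (hu'I i))
      (I.mul_mem_left _ (add_mem (hDI2 j) (I.mul_mem_right _ hμ'I)))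
  · -- support of h₁ - 1
    intro i j hi hj
    have hz : ((1 + N1) - 1) i j = N1 i j := by
      simp only [Matrix.sub_apply, Matrix.add_apply]
      ring
    rw [hz, hN1]
    simp only [Matrix.add_apply, vecMulVec_apply, Pi.add_apply, Pi.smul_apply, smul_eq_mul, ha1]
    rw [heL, he0, Pi.single_apply, Pi.single_apply, if_neg hj, if_neg hi]
    ring
  · -- support of h₂ - 1
    intro i j hj hi
    have hz : ((1 + N2) - 1) i j = N2 i j := by
      simp only [Matrix.sub_apply, Matrix.add_apply]
      ring
    rw [hz, hN2]
    simp only [Matrix.add_apply, vecMulVec_apply, Pi.add_apply, Pi.smul_apply, smul_eq_mul, haL,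
      Pi.neg_apply]
    rw [heL, he0, Pi.single_apply, Pi.single_apply, if_neg hj, if_neg hi]
    ring
  · -- first entry
    show ((1 + N2) *ᵥ w) ⟨0, hl0⟩ = 1 + s
    rw [hw' ⟨0, hl0⟩, hu'0, heL0, hs]
    ring
  · -- last entry
    show ((1 + N2) *ᵥ w) ⟨2 * l - 1, hlL⟩ = s
    rw [hw' ⟨2 * l - 1, hlL⟩, hu'L, hDw, heL, Pi.single_apply, if_pos rfl, hμ', ht]
    ring
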